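/- Under the hypotheses of Corollary 4 (f convex and Lipschitz with constant σₚ on conv Ω, P a product probability), for all c > 0: P(|f − E f| > c) ≤ 8·exp(−cᵖ/(32·σₚᵖ)). -/

import Mathlib

open Real Finset

namespace Cor4

set_option linter.unusedSectionVars false
set_option maxHeartbeats 1000000


lemma exp_rpow' (t l : ℝ) : (Real.exp t) ^ l = Real.exp (t * l) := by
  rw [Real.rpow_def_of_pos (Real.exp_pos t), Real.log_exp]

lemma sq_combo {E : Type*} [NormedAddCommGroup E] [NormedSpace ℝ E]
    (a b c : E) {l : ℝ} (h0 : 0 ≤ l) (h1 : l ≤ 1) :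
    ‖a - (l • b + (1 - l) • c)‖ ^ 2 ≤ l * ‖a - b‖ ^ 2 + (1 - l) * ‖a - c‖ ^ 2 := by
  have key : a - (l • b + (1 - l) • c) = l • (a - b) + (1 - l) • (a - c) := by
    rw [smul_sub, smul_sub]
    have : l • a + (1 - l) • a = a := by
      rw [← add_smul]; simp
    abel_nf
    rw [← add_smul]
    simp [sub_smul]
    abel
  have hn : ‖a - (l • b + (1 - l) • c)‖ ≤ l * ‖a - b‖ + (1 - l) * ‖a - c‖ := by
    rw [key]
    refine (norm_add_le _ _).trans ?_
    rw [norm_smul, norm_smul, Real.norm_eq_abs, Real.norm_eq_abs,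
      abs_of_nonneg h0, abs_of_nonneg (by linarith)]
  have h2 : (l * ‖a - b‖ + (1 - l) * ‖a - c‖) ^ 2 ≤ l * ‖a - b‖ ^ 2 + (1 - l) * ‖a - c‖ ^ 2 := by
    nlinarith [mul_nonneg (mul_nonneg h0 (sub_nonneg.mpr h1)) (sq_nonneg (‖a - b‖ - ‖a - c‖))]
  calc ‖a - (l • b + (1 - l) • c)‖ ^ 2
      ≤ (l * ‖a - b‖ + (1 - l) * ‖a - c‖) ^ 2 := by
        apply pow_le_pow_left₀ (norm_nonneg _) hn
    _ ≤ _ := h2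

lemma holder_sum {ι : Type*} (s : Finset ι) (u v : ι → ℝ)
    (hu : ∀ i ∈ s, 0 ≤ u i) (hv : ∀ i ∈ s, 0 ≤ v i) {l : ℝ} (h0 : 0 ≤ l) (h1 : l ≤ 1) :
    ∑ i ∈ s, (u i) ^ l * (v i) ^ (1 - l) ≤ (∑ i ∈ s, u i) ^ l * (∑ i ∈ s, v i) ^ (1 - l) := by
  rcases eq_or_lt_of_le h0 with h | hl0
  · simp [← h]
  rcases eq_or_lt_of_le h1 with h | hl1
  · simp [h]
  have hU : 0 ≤ ∑ i ∈ s, u i := Finset.sum_nonneg hu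
  have hV : 0 ≤ ∑ i ∈ s, v i := Finset.sum_nonneg hv
  rcases eq_or_lt_of_le hU with hU0 | hU0
  · have : ∀ i ∈ s, u i = 0 := by
      intro i hi
      exact (Finset.sum_eq_zero_iff_of_nonneg hu).mp hU0.symm i hi
    have : ∑ i ∈ s, (u i) ^ l * (v i) ^ (1 - l) = 0 := by
      apply Finset.sum_eq_zero
      intro i hi
      rw [this i hi, Real.zero_rpow (ne_of_gt hl0), zero_mul]
    rw [this, ← hU0, Real.zero_rpow (ne_of_gt hl0), zero_mul]
  rcases eq_or_lt_of_le hV with hV0 | hV0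
  · have : ∀ i ∈ s, v i = 0 := by
      intro i hi
      exact (Finset.sum_eq_zero_iff_of_nonneg hv).mp hV0.symm i hi
    have hz : ∑ i ∈ s, (u i) ^ l * (v i) ^ (1 - l) = 0 := by
      apply Finset.sum_eq_zero
      intro i hi
      rw [this i hi, Real.zero_rpow (by linarith), mul_zero]
    rw [hz, ← hV0, Real.zero_rpow (by linarith), mul_zero]
  set U := ∑ i ∈ s, u i
  set V := ∑ i ∈ s, v i
  have key : ∀ i ∈ s, (u i) ^ l * (v i) ^ (1 - l) ≤
      (l * (u i / U) + (1 - l) * (v i / V)) * (U ^ l * V ^ (1 - l)) := by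
    intro i hi
    have hgm := Real.geom_mean_le_arith_mean2_weighted (le_of_lt hl0) (by linarith : (0:ℝ) ≤ 1 - l)
      (div_nonneg (hu i hi) hU) (div_nonneg (hv i hi) hV) (by ring)
    have e1 : (u i / U) ^ l * (v i / V) ^ (1 - l) ≤ l * (u i / U) + (1 - l) * (v i / V) := hgm
    have e2 : (u i / U) ^ l = (u i) ^ l / U ^ l := Real.div_rpow (hu i hi) (le_of_lt hU0) l
    have e3 : (v i / V) ^ (1 - l) = (v i) ^ (1 - l) / V ^ (1 - l) := Real.div_rpow (hv i hi) (le_of_lt hV0) (1-l)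
    have hUl : 0 < U ^ l := Real.rpow_pos_of_pos hU0 l
    have hVl : 0 < V ^ (1 - l) := Real.rpow_pos_of_pos hV0 (1 - l)
    rw [e2, e3] at e1
    have := mul_le_mul_of_nonneg_right e1 (le_of_lt (mul_pos hUl hVl))
    calc (u i) ^ l * (v i) ^ (1 - l)
        = (u i) ^ l / U ^ l * ((v i) ^ (1 - l) / V ^ (1 - l)) * (U ^ l * V ^ (1 - l)) := by
          field_simp
      _ ≤ (l * (u i / U) + (1 - l) * (v i / V)) * (U ^ l * V ^ (1 - l)) := this
  calc ∑ i ∈ s, (u i) ^ l * (v i) ^ (1 - l)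
      ≤ ∑ i ∈ s, (l * (u i / U) + (1 - l) * (v i / V)) * (U ^ l * V ^ (1 - l)) :=
        Finset.sum_le_sum key
    _ = (∑ i ∈ s, (l * (u i / U) + (1 - l) * (v i / V))) * (U ^ l * V ^ (1 - l)) := by
        rw [← Finset.sum_mul]
    _ = U ^ l * V ^ (1 - l) := by
        have hs : ∑ i ∈ s, (l * (u i / U) + (1 - l) * (v i / V)) = 1 := by
          rw [Finset.sum_add_distrib, ← Finset.mul_sum, ← Finset.mul_sum,
            ← Finset.sum_div, ← Finset.sum_div]
          field_simp
          change (l * U) * V + U * (1 - l) * V = U * V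
          ring
        rw [hs, one_mul]



lemma exp_taylor3 {x : ℝ} (hx0 : 0 ≤ x) (hx1 : x ≤ 1) :
    Real.exp x ≤ 1 + x + x ^ 2 / 2 + (2 / 9) * x ^ 3 := by
  have h := Real.exp_bound (by rw [abs_of_nonneg hx0]; exact hx1) (by norm_num : 0 < 3)
  have hs : ∑ i ∈ Finset.range 3, x ^ i / (Nat.factorial i : ℝ) = 1 + x + x ^ 2 / 2 := by
    norm_num [Finset.sum_range_succ, Nat.factorial]
  rw [hs] at h
  have habs : |x| ^ 3 = x ^ 3 := by rw [abs_of_nonneg hx0]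
  have h2 : Real.exp x - (1 + x + x ^ 2 / 2) ≤ x ^ 3 * ((3 : ℕ).succ / ((3:ℕ).factorial * (3:ℕ) : ℝ)) := by
    calc Real.exp x - (1 + x + x ^ 2 / 2) ≤ |Real.exp x - (1 + x + x ^ 2 / 2)| := le_abs_self _
      _ ≤ |x| ^ 3 * ((3:ℕ).succ / ((3:ℕ).factorial * (3:ℕ) : ℝ)) := h
      _ = x ^ 3 * ((3:ℕ).succ / ((3:ℕ).factorial * (3:ℕ) : ℝ)) := by rw [habs]
  have : ((3:ℕ).succ / ((3:ℕ).factorial * (3:ℕ) : ℝ)) = 2 / 9 := by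
    norm_num [Nat.factorial]
  rw [this] at h2
  linarith

lemma exp_taylor3_neg {s : ℝ} (hs0 : 0 ≤ s) (hs1 : s ≤ 1) :
    Real.exp (-s) ≤ 1 - s + s ^ 2 / 2 + (2 / 9) * s ^ 3 := by
  have h := Real.exp_bound (x := -s) (by rw [abs_neg, abs_of_nonneg hs0]; exact hs1) (by norm_num : 0 < 3)
  have hsum : ∑ i ∈ Finset.range 3, (-s) ^ i / (Nat.factorial i : ℝ) = 1 - s + s ^ 2 / 2 := by
    norm_num [Finset.sum_range_succ, Nat.factorial]
    ring
  rw [hsum] at h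
  have habs : |(-s)| ^ 3 = s ^ 3 := by rw [abs_neg, abs_of_nonneg hs0]
  have h2 : Real.exp (-s) - (1 - s + s ^ 2 / 2) ≤ s ^ 3 * ((3 : ℕ).succ / ((3:ℕ).factorial * (3:ℕ) : ℝ)) := by
    calc Real.exp (-s) - (1 - s + s ^ 2 / 2) ≤ |Real.exp (-s) - (1 - s + s ^ 2 / 2)| := le_abs_self _
      _ ≤ |(-s)| ^ 3 * ((3:ℕ).succ / ((3:ℕ).factorial * (3:ℕ) : ℝ)) := h
      _ = s ^ 3 * ((3:ℕ).succ / ((3:ℕ).factorial * (3:ℕ) : ℝ)) := by rw [habs]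
  have : ((3:ℕ).succ / ((3:ℕ).factorial * (3:ℕ) : ℝ)) = 2 / 9 := by
    norm_num [Nat.factorial]
  rw [this] at h2
  linarith

lemma key_ineq {s : ℝ} (hs0 : 0 ≤ s) (hs1 : s ≤ 1 / 2) :
    Real.exp (s - s ^ 2) + Real.exp (-s) ≤ 2 := by
  have hx0 : 0 ≤ s - s ^ 2 := by nlinarith
  have hx1 : s - s ^ 2 ≤ 1 := by nlinarith
  have h1 := exp_taylor3 hx0 hx1
  have h2 := exp_taylor3_neg hs0 (by linarith)
  nlinarith [sq_nonneg s, sq_nonneg (1 - s), mul_nonneg hs0 (sq_nonneg (1 - s)),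
    mul_nonneg (mul_nonneg hs0 hs0) hs0, sq_nonneg (s * (1 - s))]

lemma calc_lemma {r : ℝ} (h0 : 0 < r) (h1 : r ≤ 1) :
    ∃ l : ℝ, 0 ≤ l ∧ l ≤ 1 ∧ Real.exp ((1 - l) ^ 2 / 4) * r ^ (-l) ≤ 2 - r := by
  rcases le_or_gt r (2/3) with hr | hr
  · refine ⟨0, le_refl _, by norm_num, ?_⟩
    rw [neg_zero, Real.rpow_zero, mul_one]
    have : Real.exp ((1 - (0:ℝ)) ^ 2 / 4) = Real.exp (1/4) := by norm_num
    rw [this]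
    have := Real.exp_bound_div_one_sub_of_interval (by norm_num : (0:ℝ) ≤ 1/4) (by norm_num : (1:ℝ)/4 < 1)
    have h43 : (1:ℝ) / (1 - 1/4) = 4/3 := by norm_num
    rw [h43] at this
    linarith
  · set s := -Real.log r with hsdef
    have hlogr : Real.log r ≤ 0 := Real.log_nonpos (le_of_lt h0) h1
    have hs0 : 0 ≤ s := by simp [hsdef]; linarith
    have hs12 : s ≤ 1 / 2 := by
      have h32 : Real.exp (1/2) ≥ 3/2 := by
        have := Real.add_one_le_exp (1/2 : ℝ)
        linarith
      have hr23 : Real.exp (-(1/2)) ≤ 2/3 := by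
        rw [Real.exp_neg]
        rw [inv_le_comm₀ (Real.exp_pos _) (by norm_num)]
        linarith
      by_contra hcon
      push_neg at hcon
      have : r = Real.exp (-s) := by rw [hsdef, neg_neg, Real.exp_log h0]
      have : r < Real.exp (-(1/2)) := by
        rw [this]
        apply Real.exp_lt_exp.mpr
        linarith
      linarith
    refine ⟨1 - 2 * s, by linarith, by linarith, ?_⟩
    have hrs : r = Real.exp (-s) := by rw [hsdef, neg_neg, Real.exp_log h0]
    have e1 : (1 - (1 - 2*s)) ^ 2 / 4 = s ^ 2 := by ring
    have e2 : r ^ (-(1 - 2*s)) = Real.exp (s - 2 * s ^ 2) := by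
      rw [Real.rpow_def_of_pos h0]
      congr 1
      have : Real.log r = -s := by rw [hsdef]; ring
      rw [this]; ring
    rw [e1, e2, ← Real.exp_add]
    have e3 : s ^ 2 + (s - 2 * s ^ 2) = s - s ^ 2 := by ring
    rw [e3, hrs]
    have := key_ineq hs0 hs12
    linarith



universe u

variable {n : ℕ}

section PhiDef

variable {m : ℕ} {X : Fin m → Type u} [∀ i, NormedAddCommGroup (X i)] [∀ i, NormedSpace ℝ (X i)]

noncomputable def Phi (A : Finset (∀ i, X i)) (x : ∀ i, X i) : ℝ :=
  sInf ((fun y => ∑ i, ‖x i - y i‖ ^ 2) '' (convexHull ℝ (A : Set (∀ i, X i))))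

lemma bddBelow_costs (A : Finset (∀ i, X i)) (x : ∀ i, X i) :
    BddBelow ((fun y => ∑ i, ‖x i - y i‖ ^ 2) '' (convexHull ℝ (A : Set (∀ i, X i)))) := by
  refine ⟨0, ?_⟩
  rintro a ⟨y, -, rfl⟩
  exact Finset.sum_nonneg fun i _ => sq_nonneg _

lemma Phi_le {A : Finset (∀ i, X i)} {x y : ∀ i, X i}
    (hy : y ∈ convexHull ℝ (A : Set (∀ i, X i))) :
    Phi A x ≤ ∑ i, ‖x i - y i‖ ^ 2 :=
  csInf_le (bddBelow_costs A x) ⟨y, hy, rfl⟩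

lemma le_Phi {A : Finset (∀ i, X i)} {x : ∀ i, X i} {t : ℝ} (hA : A.Nonempty)
    (h : ∀ y ∈ convexHull ℝ (A : Set (∀ i, X i)), t ≤ ∑ i, ‖x i - y i‖ ^ 2) :
    t ≤ Phi A x := by
  apply le_csInf
  · obtain ⟨a, ha⟩ := hA
    exact ⟨_, ⟨a, subset_convexHull ℝ _ (Finset.mem_coe.mpr ha), rfl⟩⟩
  · rintro b ⟨y, hy, rfl⟩
    exact h y hy

lemma Phi_approx {A : Finset (∀ i, X i)} {x : ∀ i, X i} (hA : A.Nonempty) {ε : ℝ} (hε : 0 < ε) :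
    ∃ y ∈ convexHull ℝ (A : Set (∀ i, X i)), ∑ i, ‖x i - y i‖ ^ 2 < Phi A x + ε := by
  have hne : ((fun y => ∑ i, ‖x i - y i‖ ^ 2) '' (convexHull ℝ (A : Set (∀ i, X i)))).Nonempty := by
    obtain ⟨a, ha⟩ := hA
    exact ⟨_, ⟨a, subset_convexHull ℝ _ (Finset.mem_coe.mpr ha), rfl⟩⟩
  obtain ⟨b, ⟨y, hy, rfl⟩, hlt⟩ := Real.lt_sInf_add_pos hne hε
  exact ⟨y, hy, hlt⟩

lemma mem_hull_pi {Ω : ∀ i, Finset (X i)} {x : ∀ i, X i}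
    (hx : x ∈ convexHull ℝ ((Fintype.piFinset Ω : Finset (∀ i, X i)) : Set (∀ i, X i))) (i : Fin m) :
    x i ∈ convexHull ℝ ((Ω i : Set (X i))) := by
  have hsub : convexHull ℝ ((Fintype.piFinset Ω : Finset (∀ i, X i)) : Set (∀ i, X i)) ⊆
      Set.pi Set.univ (fun i => convexHull ℝ ((Ω i : Set (X i)))) := by
    apply convexHull_min
    · intro y hy
      rw [Set.mem_pi]
      intro i _
      exact subset_convexHull ℝ _ (Finset.mem_coe.mpr (Fintype.mem_piFinset.mp (Finset.mem_coe.mp hy) i))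
    · exact convex_pi fun i _ => convex_convexHull ℝ _
  exact (Set.mem_pi.mp (hsub hx)) i (Set.mem_univ i)

end PhiDef

lemma norm_sub_le_one {E : Type u} [NormedAddCommGroup E] [NormedSpace ℝ E]
    {Ω : Finset E} (hdiam : Metric.diam (Ω : Set E) ≤ 1) {a b : E}
    (ha : a ∈ convexHull ℝ (Ω : Set E)) (hb : b ∈ convexHull ℝ (Ω : Set E)) : ‖a - b‖ ≤ 1 := by
  rw [← dist_eq_norm]
  have hbd : Bornology.IsBounded (convexHull ℝ (Ω : Set E)) :=
    isBounded_convexHull.mpr Ω.finite_toSet.isBounded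
  calc dist a b ≤ Metric.diam (convexHull ℝ (Ω : Set E)) := Metric.dist_le_diam_of_mem hbd ha hb
    _ = Metric.diam (Ω : Set E) := convexHull_diam _
    _ ≤ 1 := hdiam

section Snoc

variable {X : Fin (n + 1) → Type u} [∀ i, NormedAddCommGroup (X i)] [∀ i, NormedSpace ℝ (X i)]

lemma snoc_mem_piFinset {Ω : ∀ i, Finset (X i)}
    {z : ∀ j : Fin n, X j.castSucc} (hz : z ∈ Fintype.piFinset (fun j : Fin n => Ω j.castSucc))
    {ω : X (Fin.last n)} (hω : ω ∈ Ω (Fin.last n)) :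
    Fin.snoc z ω ∈ Fintype.piFinset Ω := by
  rw [Fintype.mem_piFinset]
  intro i
  refine Fin.lastCases ?_ ?_ i
  · rw [Fin.snoc_last]; exact hω
  · intro j
    rw [Fin.snoc_castSucc]
    exact Fintype.mem_piFinset.mp hz j

lemma sum_piFinset_succ (Ω : ∀ i, Finset (X i)) (g : (∀ i, X i) → ℝ) :
    ∑ x ∈ Fintype.piFinset Ω, g x =
      ∑ ω ∈ Ω (Fin.last n), ∑ z ∈ Fintype.piFinset (fun j : Fin n => Ω j.castSucc),
        g (Fin.snoc z ω) := by
  have h1 : ∑ x ∈ Fintype.piFinset Ω, g x =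
      ∑ p ∈ (Ω (Fin.last n)) ×ˢ (Fintype.piFinset fun j : Fin n => Ω j.castSucc),
        g (Fin.snoc p.2 p.1) := by
    apply Finset.sum_nbij' (i := fun x => (x (Fin.last n), Fin.init x))
      (j := fun p => Fin.snoc p.2 p.1)
    · intro x hx
      rw [Finset.mem_product]
      constructor
      · exact Fintype.mem_piFinset.mp hx _
      · exact Fintype.mem_piFinset.mpr fun j => Fintype.mem_piFinset.mp hx _
    · intro p hp
      rw [Finset.mem_product] at hp
      exact snoc_mem_piFinset hp.2 hp.1
    · intro x hx
      exact Fin.snoc_init_self x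
    · intro p hp
      simp [Fin.init_snoc, Fin.snoc_last]
    · intro x hx
      rw [Fin.snoc_init_self]
  rw [h1, Finset.sum_product]

lemma prod_snoc (P : ∀ i, X i → ℝ) (z : ∀ j : Fin n, X j.castSucc) (ω : X (Fin.last n)) :
    ∏ i, P i (Fin.snoc z ω i) = (∏ j : Fin n, P j.castSucc (z j)) * P (Fin.last n) ω := by
  rw [Fin.prod_univ_castSucc]
  simp [Fin.snoc_castSucc, Fin.snoc_last]

lemma snoc_hull_mem {A : Finset (∀ i, X i)} {Aw : Finset (∀ j : Fin n, X j.castSucc)}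
    {ω : X (Fin.last n)} (hAwA : ∀ z ∈ Aw, Fin.snoc z ω ∈ A)
    {y : ∀ j : Fin n, X j.castSucc} (hy : y ∈ convexHull ℝ (Aw : Set (∀ j : Fin n, X j.castSucc))) :
    Fin.snoc y ω ∈ convexHull ℝ (A : Set (∀ i, X i)) := by
  have hsub : (Aw : Set (∀ j : Fin n, X j.castSucc)) ⊆
      {z | Fin.snoc z ω ∈ convexHull ℝ (A : Set (∀ i, X i))} := fun z hz =>
    subset_convexHull ℝ _ (Finset.mem_coe.mpr (hAwA z (Finset.mem_coe.mp hz)))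
  have hconv : Convex ℝ {z | Fin.snoc z ω ∈ convexHull ℝ (A : Set (∀ i, X i))} := by
    intro z₁ h₁ z₂ h₂ a b ha hb hab
    have hkey : (Fin.snoc (a • z₁ + b • z₂) ω : ∀ i, X i) =
        a • Fin.snoc z₁ ω + b • Fin.snoc z₂ ω := by
      funext i
      refine Fin.lastCases ?_ ?_ i
      · simp only [Fin.snoc_last, Pi.add_apply, Pi.smul_apply]
        rw [← add_smul, hab, one_smul]
      · intro j
        simp only [Fin.snoc_castSucc, Pi.add_apply, Pi.smul_apply]
    simp only [Set.mem_setOf_eq] at h₁ h₂ ⊢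
    rw [hkey]
    exact (convex_convexHull ℝ _) h₁ h₂ ha hb hab
  exact convexHull_min hsub hconv hy

lemma init_hull_surj [DecidableEq (∀ j : Fin n, X j.castSucc)] {A : Finset (∀ i, X i)}
    {y' : ∀ j : Fin n, X j.castSucc}
    (hy' : y' ∈ convexHull ℝ ((A.image (fun x => Fin.init x) : Finset _) : Set (∀ j : Fin n, X j.castSucc))) :
    ∃ w ∈ convexHull ℝ (A : Set (∀ i, X i)), Fin.init w = y' := by
  let L : (∀ i, X i) →ₗ[ℝ] (∀ j : Fin n, X j.castSucc) :=
    { toFun := fun x => Fin.init x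
      map_add' := fun x y => rfl
      map_smul' := fun c x => rfl }
  have himg : ((A.image (fun x => Fin.init x) : Finset _) : Set (∀ j : Fin n, X j.castSucc)) =
      L '' (A : Set (∀ i, X i)) := by
    rw [Finset.coe_image]
    rfl
  rw [himg, ← L.image_convexHull] at hy'
  obtain ⟨w, h1, h2⟩ := hy'
  exact ⟨w, h1, h2⟩

end Snoc


variable {n : ℕ}
variable {X : Fin (n + 1) → Type u} [∀ i, NormedAddCommGroup (X i)] [∀ i, NormedSpace ℝ (X i)]

set_option linter.unusedSectionVars false

/-- Main pointwise inequality with mixing parameter `l`. -/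
lemma Phi_snoc_le [DecidableEq (∀ j : Fin n, X j.castSucc)]
    {Ω : ∀ i, Finset (X i)} (hdlast : Metric.diam ((Ω (Fin.last n) : Set (X (Fin.last n)))) ≤ 1)
    {A : Finset (∀ i, X i)} (hA : ∀ x ∈ A, x ∈ Fintype.piFinset Ω)
    {ω : X (Fin.last n)} (hω : ω ∈ Ω (Fin.last n))
    {Aw : Finset (∀ j : Fin n, X j.castSucc)}
    (hAwA : ∀ z ∈ Aw, Fin.snoc z ω ∈ A) (hAw : Aw.Nonempty)
    {l : ℝ} (h0 : 0 ≤ l) (h1 : l ≤ 1) (z : ∀ j : Fin n, X j.castSucc) :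
    Phi A (Fin.snoc z ω) ≤
      l * Phi Aw z + (1 - l) * Phi (A.image (fun x => Fin.init x)) z + (1 - l) ^ 2 := by
  have hAne : A.Nonempty := by
    obtain ⟨a, ha⟩ := hAw
    exact ⟨_, hAwA a ha⟩
  have hBne : (A.image (fun x => Fin.init x)).Nonempty := hAne.image _
  apply le_of_forall_pos_le_add
  intro ε hε
  obtain ⟨y, hy, hcy⟩ := Phi_approx (x := z) hAw hε
  obtain ⟨y', hy', hcy'⟩ := Phi_approx (x := z) hBne hε
  obtain ⟨w, hwA, hwinit⟩ := init_hull_surj (A := A) hy'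
  set uu : ∀ i, X i := l • (Fin.snoc y ω) + (1 - l) • w with huu
  have hu : uu ∈ convexHull ℝ (A : Set (∀ i, X i)) :=
    (convex_convexHull ℝ _) (snoc_hull_mem hAwA hy) hwA h0 (by linarith) (by ring)
  have hPhi := Phi_le (x := Fin.snoc z ω) hu
  -- hull membership of w's coordinates
  have hwpi : w ∈ convexHull ℝ ((Fintype.piFinset Ω : Finset (∀ i, X i)) : Set (∀ i, X i)) := by
    apply convexHull_mono ?_ hwA
    intro t ht
    exact Finset.mem_coe.mpr (hA t (Finset.mem_coe.mp ht))
  have hwlast : w (Fin.last n) ∈ convexHull ℝ ((Ω (Fin.last n) : Set (X (Fin.last n)))) :=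
    mem_hull_pi hwpi (Fin.last n)
  have hωhull : ω ∈ convexHull ℝ ((Ω (Fin.last n) : Set (X (Fin.last n)))) :=
    subset_convexHull ℝ _ (Finset.mem_coe.mpr hω)
  have hcost : ∑ i, ‖Fin.snoc z ω i - uu i‖ ^ 2 ≤
      l * (∑ j, ‖z j - y j‖ ^ 2) + (1 - l) * (∑ j, ‖z j - y' j‖ ^ 2) + (1 - l) ^ 2 := by
    rw [Fin.sum_univ_castSucc]
    have hlast : ‖Fin.snoc z ω (Fin.last n) - uu (Fin.last n)‖ ^ 2 ≤ (1 - l) ^ 2 := by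
      have e1 : (Fin.snoc z ω : ∀ i, X i) (Fin.last n) = ω := Fin.snoc_last _ _
      have e2 : uu (Fin.last n) = l • ω + (1 - l) • w (Fin.last n) := by
        simp only [huu, Pi.add_apply, Pi.smul_apply, Fin.snoc_last]
      have e3 : ω - (l • ω + (1 - l) • w (Fin.last n)) = (1 - l) • (ω - w (Fin.last n)) := by
        module
      rw [e1, e2, e3, norm_smul, Real.norm_eq_abs, abs_of_nonneg (by linarith : (0:ℝ) ≤ 1 - l),
        mul_pow]
      have hn1 : ‖ω - w (Fin.last n)‖ ≤ 1 := norm_sub_le_one hdlast hωhull hwlast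
      have ht2 : ‖ω - w (Fin.last n)‖ ^ 2 ≤ 1 := by
        nlinarith [norm_nonneg (ω - w (Fin.last n))]
      exact mul_le_of_le_one_right (sq_nonneg (1 - l)) ht2
    have hcoords : ∀ j : Fin n,
        ‖Fin.snoc z ω (Fin.castSucc j) - uu (Fin.castSucc j)‖ ^ 2 ≤
          l * ‖z j - y j‖ ^ 2 + (1 - l) * ‖z j - y' j‖ ^ 2 := by
      intro j
      have e1 : (Fin.snoc z ω : ∀ i, X i) (Fin.castSucc j) = z j := Fin.snoc_castSucc _ _ _
      have e2 : uu (Fin.castSucc j) = l • y j + (1 - l) • w (Fin.castSucc j) := by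
        simp only [huu, Pi.add_apply, Pi.smul_apply, Fin.snoc_castSucc]
      have e3 : w (Fin.castSucc j) = y' j := by
        rw [← hwinit]
        rfl
      rw [e1, e2, e3]
      exact sq_combo (z j) (y j) (y' j) h0 h1
    calc (∑ j : Fin n, ‖Fin.snoc z ω (Fin.castSucc j) - uu (Fin.castSucc j)‖ ^ 2) +
          ‖Fin.snoc z ω (Fin.last n) - uu (Fin.last n)‖ ^ 2
        ≤ (∑ j : Fin n, (l * ‖z j - y j‖ ^ 2 + (1 - l) * ‖z j - y' j‖ ^ 2)) + (1 - l) ^ 2 :=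
          add_le_add (Finset.sum_le_sum fun j _ => hcoords j) hlast
      _ = l * (∑ j, ‖z j - y j‖ ^ 2) + (1 - l) * (∑ j, ‖z j - y' j‖ ^ 2) + (1 - l) ^ 2 := by
          rw [Finset.sum_add_distrib, ← Finset.mul_sum, ← Finset.mul_sum]
  calc Phi A (Fin.snoc z ω) ≤ ∑ i, ‖Fin.snoc z ω i - uu i‖ ^ 2 := hPhi
    _ ≤ l * (∑ j, ‖z j - y j‖ ^ 2) + (1 - l) * (∑ j, ‖z j - y' j‖ ^ 2) + (1 - l) ^ 2 := hcost
    _ ≤ l * (Phi Aw z + ε) + (1 - l) * (Phi (A.image (fun x => Fin.init x)) z + ε) + (1 - l) ^ 2 := by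
        refine add_le_add ?_ le_rfl
        apply add_le_add
        · exact mul_le_mul_of_nonneg_left (le_of_lt hcy) h0
        · exact mul_le_mul_of_nonneg_left (le_of_lt hcy') (by linarith)
    _ = l * Phi Aw z + (1 - l) * Phi (A.image (fun x => Fin.init x)) z + (1 - l) ^ 2 + ε := by
        ring

/-- Degenerate case: no section information, use the projection only. -/
lemma Phi_snoc_le0 [DecidableEq (∀ j : Fin n, X j.castSucc)]
    {Ω : ∀ i, Finset (X i)} (hdlast : Metric.diam ((Ω (Fin.last n) : Set (X (Fin.last n)))) ≤ 1)
    {A : Finset (∀ i, X i)} (hA : ∀ x ∈ A, x ∈ Fintype.piFinset Ω) (hAne : A.Nonempty)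
    {ω : X (Fin.last n)} (hω : ω ∈ Ω (Fin.last n)) (z : ∀ j : Fin n, X j.castSucc) :
    Phi A (Fin.snoc z ω) ≤ Phi (A.image (fun x => Fin.init x)) z + 1 := by
  have hBne : (A.image (fun x => Fin.init x)).Nonempty := hAne.image _
  apply le_of_forall_pos_le_add
  intro ε hε
  obtain ⟨y', hy', hcy'⟩ := Phi_approx (x := z) hBne hε
  obtain ⟨w, hwA, hwinit⟩ := init_hull_surj (A := A) hy'
  have hPhi := Phi_le (x := Fin.snoc z ω) hwA
  have hwpi : w ∈ convexHull ℝ ((Fintype.piFinset Ω : Finset (∀ i, X i)) : Set (∀ i, X i)) := by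
    apply convexHull_mono ?_ hwA
    intro t ht
    exact Finset.mem_coe.mpr (hA t (Finset.mem_coe.mp ht))
  have hwlast : w (Fin.last n) ∈ convexHull ℝ ((Ω (Fin.last n) : Set (X (Fin.last n)))) :=
    mem_hull_pi hwpi (Fin.last n)
  have hωhull : ω ∈ convexHull ℝ ((Ω (Fin.last n) : Set (X (Fin.last n)))) :=
    subset_convexHull ℝ _ (Finset.mem_coe.mpr hω)
  have hcost : ∑ i, ‖Fin.snoc z ω i - w i‖ ^ 2 ≤ (∑ j, ‖z j - y' j‖ ^ 2) + 1 := by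
    rw [Fin.sum_univ_castSucc]
    apply add_le_add
    · apply le_of_eq
      apply Finset.sum_congr rfl
      intro j _
      have e1 : (Fin.snoc z ω : ∀ i, X i) (Fin.castSucc j) = z j := Fin.snoc_castSucc _ _ _
      have e3 : w (Fin.castSucc j) = y' j := by rw [← hwinit]; rfl
      rw [e1, e3]
    · have e1 : (Fin.snoc z ω : ∀ i, X i) (Fin.last n) = ω := Fin.snoc_last _ _
      rw [e1]
      have hn1 : ‖ω - w (Fin.last n)‖ ≤ 1 := norm_sub_le_one hdlast hωhull hwlast
      nlinarith [norm_nonneg (ω - w (Fin.last n))]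
  calc Phi A (Fin.snoc z ω) ≤ ∑ i, ‖Fin.snoc z ω i - w i‖ ^ 2 := hPhi
    _ ≤ (∑ j, ‖z j - y' j‖ ^ 2) + 1 := hcost
    _ ≤ (Phi (A.image (fun x => Fin.init x)) z + ε) + 1 := by linarith
    _ = Phi (A.image (fun x => Fin.init x)) z + 1 + ε := by ring


theorem core (N : ℕ) :
    ∀ (X : Fin N → Type u) [inst1 : ∀ i, NormedAddCommGroup (X i)]
      [inst2 : ∀ i, NormedSpace ℝ (X i)]
      (Ω : ∀ i, Finset (X i)) (P : ∀ i, X i → ℝ),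
      (∀ i x, 0 ≤ P i x) → (∀ i, ∑ x ∈ Ω i, P i x = 1) →
      (∀ i, Metric.diam ((Ω i : Set (X i))) ≤ 1) →
      ∀ A : Finset (∀ i, X i), A ⊆ Fintype.piFinset Ω →
      (∑ x ∈ Fintype.piFinset Ω, (∏ i, P i (x i)) * Real.exp (Phi A x / 4)) *
        (∑ x ∈ A, ∏ i, P i (x i)) ≤ 1 := by
  induction N with
  | zero =>
    intro X inst1 inst2 Ω P hP0 hP1 hdiam A hA
    rcases A.eq_empty_or_nonempty with rfl | ⟨a, ha⟩
    · simp
    · have hsub : ∀ x y : (∀ i : Fin 0, X i), x = y := fun x y => funext fun i => i.elim0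
      have hpf : Fintype.piFinset Ω = {a} :=
        Finset.eq_singleton_iff_unique_mem.mpr ⟨hA ha, fun x _ => hsub x a⟩
      have hA' : A = {a} :=
        Finset.eq_singleton_iff_unique_mem.mpr ⟨ha, fun x _ => hsub x a⟩
      rw [hpf, hA']
      simp only [Finset.sum_singleton]
      have hW : (∏ i : Fin 0, P i (a i)) = 1 := by simp
      rw [hW, mul_one, one_mul]
      have hPhi : Phi ({a} : Finset (∀ i : Fin 0, X i)) a ≤ 0 := by
        have hmem : a ∈ convexHull ℝ ((({a} : Finset (∀ i : Fin 0, X i))) : Set (∀ i : Fin 0, X i)) :=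
          subset_convexHull ℝ _ (by simp)
        have h := Phi_le (x := a) hmem
        simpa using h
      calc Real.exp (Phi ({a} : Finset (∀ i : Fin 0, X i)) a / 4) ≤ Real.exp 0 :=
            Real.exp_le_exp.mpr (by linarith)
        _ = 1 := Real.exp_zero
  | succ n IH =>
    intro X inst1 inst2 Ω P hP0 hP1 hdiam A hA
    classical
    set pfc := Fintype.piFinset (fun j : Fin n => Ω j.castSucc) with hpfc
    set B := A.image (fun x => Fin.init x) with hBdef
    set Wc : (∀ j : Fin n, X j.castSucc) → ℝ := fun z => ∏ j, P j.castSucc (z j) with hWcdef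
    set w : X (Fin.last n) → ℝ := fun ω => P (Fin.last n) ω with hwdef
    set Aw : X (Fin.last n) → Finset (∀ j : Fin n, X j.castSucc) :=
      fun ω => pfc.filter (fun z => Fin.snoc z ω ∈ A) with hAwdef
    have hWc0 : ∀ z, 0 ≤ Wc z := fun z => Finset.prod_nonneg fun j _ => hP0 _ _
    have hW0 : ∀ x : (∀ i, X i), 0 ≤ ∏ i, P i (x i) :=
      fun x => Finset.prod_nonneg fun i _ => hP0 _ _
    set μA := ∑ x ∈ A, ∏ i, P i (x i) with hμAdef
    set μB := ∑ z ∈ B, Wc z with hμBdef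
    set μAw : X (Fin.last n) → ℝ := fun ω => ∑ z ∈ Aw ω, Wc z with hμAwdef
    have hμA0 : 0 ≤ μA := Finset.sum_nonneg fun x _ => hW0 x
    rcases eq_or_lt_of_le hμA0 with hμA0' | hμApos
    · rw [← hμA0', mul_zero]
      norm_num
    have hAne : A.Nonempty := by
      rcases A.eq_empty_or_nonempty with rfl | h
      · simp [hμAdef] at hμApos
      · exact h
    have hBsub : B ⊆ pfc := by
      intro z hz
      rw [hBdef, Finset.mem_image] at hz
      obtain ⟨x, hxA, rfl⟩ := hz
      exact Fintype.mem_piFinset.mpr fun j => Fintype.mem_piFinset.mp (hA hxA) _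
    have hAwB : ∀ ω, Aw ω ⊆ B := by
      intro ω z hz
      rw [hAwdef, Finset.mem_filter] at hz
      rw [hBdef, Finset.mem_image]
      exact ⟨Fin.snoc z ω, hz.2, Fin.init_snoc _ _⟩
    have hμAw0 : ∀ ω, 0 ≤ μAw ω := fun ω => Finset.sum_nonneg fun z _ => hWc0 z
    -- decomposition of μA
    have hμA : μA = ∑ ω ∈ Ω (Fin.last n), w ω * μAw ω := by
      have h1 : μA = ∑ x ∈ Fintype.piFinset Ω,
          (if x ∈ A then ∏ i, P i (x i) else 0) := by
        rw [Finset.sum_ite_mem, Finset.inter_eq_right.mpr hA]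
      rw [h1, sum_piFinset_succ]
      apply Finset.sum_congr rfl
      intro ω _
      have h2 : ∀ z ∈ pfc, (if Fin.snoc z ω ∈ A then ∏ i, P i (Fin.snoc z ω i) else 0)
          = w ω * (if Fin.snoc z ω ∈ A then Wc z else 0) := by
        intro z _
        by_cases h : Fin.snoc z ω ∈ A
        · rw [if_pos h, if_pos h, prod_snoc]
          ring
        · rw [if_neg h, if_neg h, mul_zero]
      rw [Finset.sum_congr rfl h2, ← Finset.mul_sum]
      congr 1
      simp only [hμAwdef, hAwdef, Finset.sum_filter]
    have hμAwB : ∀ ω, μAw ω ≤ μB :=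
      fun ω => Finset.sum_le_sum_of_subset_of_nonneg (hAwB ω) fun z _ _ => hWc0 z
    have hμAB : μA ≤ μB := by
      rw [hμA]
      calc ∑ ω ∈ Ω (Fin.last n), w ω * μAw ω
          ≤ ∑ ω ∈ Ω (Fin.last n), w ω * μB :=
            Finset.sum_le_sum fun ω _ => mul_le_mul_of_nonneg_left (hμAwB ω) (hP0 _ _)
        _ = μB := by rw [← Finset.sum_mul, hP1 (Fin.last n), one_mul]
    have hμB0 : 0 < μB := lt_of_lt_of_le hμApos hμAB
    -- IH for B
    have IHB := IH (fun j : Fin n => X j.castSucc) (fun j => Ω j.castSucc)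
      (fun j => P j.castSucc) (fun j x => hP0 _ _) (fun j => hP1 _) (fun j => hdiam _) B hBsub
    set TB := ∑ z ∈ pfc, Wc z * Real.exp (Phi B z / 4) with hTBdef
    have hTB0 : 0 ≤ TB :=
      Finset.sum_nonneg fun z _ => mul_nonneg (hWc0 z) (le_of_lt (Real.exp_pos _))
    have hTB : TB ≤ μB⁻¹ := by
      rw [← one_div, le_div_iff₀ hμB0]
      exact IHB
    have hexp14 : Real.exp ((1:ℝ)/4) ≤ 2 := by
      have h := Real.exp_bound_div_one_sub_of_interval
        (by norm_num : (0:ℝ) ≤ 1/4) (by norm_num : (1:ℝ)/4 < 1)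
      have : (1:ℝ) / (1 - 1/4) = 4/3 := by norm_num
      rw [this] at h
      linarith
    -- per-ω estimate
    have hInner : ∀ ω ∈ Ω (Fin.last n),
        (∑ z ∈ pfc, Wc z * Real.exp (Phi A (Fin.snoc z ω) / 4)) ≤
          (2 - μAw ω / μB) * μB⁻¹ := by
      intro ω hω
      rcases eq_or_lt_of_le (hμAw0 ω) with hz | hpos
      · -- μAw ω = 0 : crude bound
        have hbound : ∀ z ∈ pfc, Wc z * Real.exp (Phi A (Fin.snoc z ω) / 4) ≤
            Real.exp ((1:ℝ)/4) * (Wc z * Real.exp (Phi B z / 4)) := by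
          intro z _
          have hP := Phi_snoc_le0 (Ω := Ω) (hdiam (Fin.last n)) (fun x hx => hA hx) hAne hω z
          have : Real.exp (Phi A (Fin.snoc z ω) / 4) ≤
              Real.exp ((1:ℝ)/4) * Real.exp (Phi B z / 4) := by
            rw [← Real.exp_add]
            apply Real.exp_le_exp.mpr
            linarith
          calc Wc z * Real.exp (Phi A (Fin.snoc z ω) / 4)
              ≤ Wc z * (Real.exp ((1:ℝ)/4) * Real.exp (Phi B z / 4)) :=
                mul_le_mul_of_nonneg_left this (hWc0 z)
            _ = Real.exp ((1:ℝ)/4) * (Wc z * Real.exp (Phi B z / 4)) := by ring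
        calc ∑ z ∈ pfc, Wc z * Real.exp (Phi A (Fin.snoc z ω) / 4)
            ≤ ∑ z ∈ pfc, Real.exp ((1:ℝ)/4) * (Wc z * Real.exp (Phi B z / 4)) :=
              Finset.sum_le_sum hbound
          _ = Real.exp ((1:ℝ)/4) * TB := by rw [← Finset.mul_sum]
          _ ≤ 2 * μB⁻¹ := by
              apply mul_le_mul hexp14 hTB hTB0 (by norm_num)
          _ = (2 - μAw ω / μB) * μB⁻¹ := by rw [← hz, zero_div, sub_zero]
      · -- μAw ω > 0
        have hAwne : (Aw ω).Nonempty := by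
          rcases (Aw ω).eq_empty_or_nonempty with he | h
          · exfalso
            rw [hμAwdef] at hpos
            simp only [he, Finset.sum_empty] at hpos
            exact lt_irrefl _ hpos
          · exact h
        set r := μAw ω / μB with hrdef
        have hr0 : 0 < r := div_pos hpos hμB0
        have hr1 : r ≤ 1 := (div_le_one hμB0).mpr (hμAwB ω)
        obtain ⟨l, hl0, hl1, hlkey⟩ := calc_lemma hr0 hr1
        have IHAw := IH (fun j : Fin n => X j.castSucc) (fun j => Ω j.castSucc)
          (fun j => P j.castSucc) (fun j x => hP0 _ _) (fun j => hP1 _) (fun j => hdiam _)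
          (Aw ω) (Finset.filter_subset _ _)
        set TAw := ∑ z ∈ pfc, Wc z * Real.exp (Phi (Aw ω) z / 4) with hTAwdef
        have hTAw0 : 0 ≤ TAw :=
          Finset.sum_nonneg fun z _ => mul_nonneg (hWc0 z) (le_of_lt (Real.exp_pos _))
        have hTAw : TAw ≤ (μAw ω)⁻¹ := by
          rw [← one_div, le_div_iff₀ hpos]
          exact IHAw
        have hAwA : ∀ z ∈ Aw ω, Fin.snoc z ω ∈ A := by
          intro z hz
          rw [hAwdef, Finset.mem_filter] at hz
          exact hz.2
        -- pointwise bound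
        have hptwise : ∀ z ∈ pfc, Wc z * Real.exp (Phi A (Fin.snoc z ω) / 4) ≤
            Real.exp ((1 - l) ^ 2 / 4) *
              ((Wc z * Real.exp (Phi (Aw ω) z / 4)) ^ l *
               (Wc z * Real.exp (Phi B z / 4)) ^ (1 - l)) := by
          intro z _
          have hP := Phi_snoc_le (Ω := Ω) (hdiam (Fin.last n)) (fun x hx => hA hx) hω
            hAwA hAwne hl0 hl1 z
          have hexp : Real.exp (Phi A (Fin.snoc z ω) / 4) ≤
              Real.exp ((1 - l) ^ 2 / 4) *
                (Real.exp (Phi (Aw ω) z / 4 * l) * Real.exp (Phi B z / 4 * (1 - l))) := by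
            rw [← Real.exp_add, ← Real.exp_add]
            apply Real.exp_le_exp.mpr
            nlinarith [hP]
          have hsplit : (Wc z * Real.exp (Phi (Aw ω) z / 4)) ^ l *
              (Wc z * Real.exp (Phi B z / 4)) ^ (1 - l) =
              Wc z * (Real.exp (Phi (Aw ω) z / 4 * l) * Real.exp (Phi B z / 4 * (1 - l))) := by
            rw [Real.mul_rpow (hWc0 z) (le_of_lt (Real.exp_pos _)),
              Real.mul_rpow (hWc0 z) (le_of_lt (Real.exp_pos _)),
              exp_rpow', exp_rpow']
            have hWcsplit : (Wc z) ^ l * (Wc z) ^ (1 - l) = Wc z := by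
              rw [← Real.rpow_add' (hWc0 z) (by norm_num : l + (1 - l) ≠ 0)]
              norm_num
            calc (Wc z) ^ l * Real.exp (Phi (Aw ω) z / 4 * l) *
                  ((Wc z) ^ (1 - l) * Real.exp (Phi B z / 4 * (1 - l)))
                = ((Wc z) ^ l * (Wc z) ^ (1 - l)) *
                  (Real.exp (Phi (Aw ω) z / 4 * l) * Real.exp (Phi B z / 4 * (1 - l))) := by
                  ring
              _ = Wc z * (Real.exp (Phi (Aw ω) z / 4 * l) * Real.exp (Phi B z / 4 * (1 - l))) := by
                  rw [hWcsplit]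
          rw [hsplit]
          calc Wc z * Real.exp (Phi A (Fin.snoc z ω) / 4)
              ≤ Wc z * (Real.exp ((1 - l) ^ 2 / 4) *
                  (Real.exp (Phi (Aw ω) z / 4 * l) * Real.exp (Phi B z / 4 * (1 - l)))) :=
                mul_le_mul_of_nonneg_left hexp (hWc0 z)
            _ = Real.exp ((1 - l) ^ 2 / 4) *
                (Wc z * (Real.exp (Phi (Aw ω) z / 4 * l) * Real.exp (Phi B z / 4 * (1 - l)))) := by
                ring
        -- sum up, apply Hölder
        have hHolder := holder_sum pfc (fun z => Wc z * Real.exp (Phi (Aw ω) z / 4))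
          (fun z => Wc z * Real.exp (Phi B z / 4))
          (fun z _ => mul_nonneg (hWc0 z) (le_of_lt (Real.exp_pos _)))
          (fun z _ => mul_nonneg (hWc0 z) (le_of_lt (Real.exp_pos _))) hl0 hl1
        have hsum1 : ∑ z ∈ pfc, Wc z * Real.exp (Phi A (Fin.snoc z ω) / 4) ≤
            Real.exp ((1 - l) ^ 2 / 4) * (TAw ^ l * TB ^ (1 - l)) := by
          calc ∑ z ∈ pfc, Wc z * Real.exp (Phi A (Fin.snoc z ω) / 4)
              ≤ ∑ z ∈ pfc, Real.exp ((1 - l) ^ 2 / 4) *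
                  ((Wc z * Real.exp (Phi (Aw ω) z / 4)) ^ l *
                   (Wc z * Real.exp (Phi B z / 4)) ^ (1 - l)) :=
                Finset.sum_le_sum hptwise
            _ = Real.exp ((1 - l) ^ 2 / 4) *
                ∑ z ∈ pfc, ((Wc z * Real.exp (Phi (Aw ω) z / 4)) ^ l *
                   (Wc z * Real.exp (Phi B z / 4)) ^ (1 - l)) := by
                rw [← Finset.mul_sum]
            _ ≤ Real.exp ((1 - l) ^ 2 / 4) * (TAw ^ l * TB ^ (1 - l)) := by
                apply mul_le_mul_of_nonneg_left _ (le_of_lt (Real.exp_pos _))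
                exact hHolder
        -- replace TAw, TB by the inverses
        have hmono : TAw ^ l * TB ^ (1 - l) ≤ ((μAw ω)⁻¹) ^ l * (μB⁻¹) ^ (1 - l) := by
          apply mul_le_mul
          · exact Real.rpow_le_rpow hTAw0 hTAw hl0
          · exact Real.rpow_le_rpow hTB0 hTB (by linarith)
          · exact Real.rpow_nonneg hTB0 _
          · exact Real.rpow_nonneg (le_of_lt (inv_pos.mpr hpos)) _
        have halg : ((μAw ω)⁻¹) ^ l * (μB⁻¹) ^ (1 - l) = r ^ (-l) * μB⁻¹ := by
          have h1 : ((μAw ω)⁻¹) ^ l = ((μAw ω) ^ l)⁻¹ := Real.inv_rpow (le_of_lt hpos) l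
          have h2 : (μB⁻¹) ^ (1 - l) = (μB ^ (1 - l))⁻¹ := Real.inv_rpow (le_of_lt hμB0) _
          have h3 : r ^ (-l) = (r ^ l)⁻¹ := by rw [Real.rpow_neg (le_of_lt hr0)]
          have h4 : r ^ l = (μAw ω) ^ l / μB ^ l := Real.div_rpow (le_of_lt hpos) (le_of_lt hμB0) l
          have h5 : μB ^ (1 - l) = μB / μB ^ l := by rw [Real.rpow_sub hμB0, Real.rpow_one]
          have e1 : (0:ℝ) < μB ^ l := Real.rpow_pos_of_pos hμB0 l
          have e2 : (0:ℝ) < (μAw ω) ^ l := Real.rpow_pos_of_pos hpos l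
          rw [h1, h2, h3, h4, h5]
          field_simp
        calc ∑ z ∈ pfc, Wc z * Real.exp (Phi A (Fin.snoc z ω) / 4)
            ≤ Real.exp ((1 - l) ^ 2 / 4) * (TAw ^ l * TB ^ (1 - l)) := hsum1
          _ ≤ Real.exp ((1 - l) ^ 2 / 4) * (((μAw ω)⁻¹) ^ l * (μB⁻¹) ^ (1 - l)) :=
              mul_le_mul_of_nonneg_left hmono (le_of_lt (Real.exp_pos _))
          _ = (Real.exp ((1 - l) ^ 2 / 4) * r ^ (-l)) * μB⁻¹ := by rw [halg]; ring
          _ ≤ (2 - r) * μB⁻¹ :=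
              mul_le_mul_of_nonneg_right hlkey (le_of_lt (inv_pos.mpr hμB0))
          _ = (2 - μAw ω / μB) * μB⁻¹ := by rw [hrdef]
    -- assemble over the last coordinate
    have hT : (∑ x ∈ Fintype.piFinset Ω, (∏ i, P i (x i)) * Real.exp (Phi A x / 4)) =
        ∑ ω ∈ Ω (Fin.last n), w ω *
          ∑ z ∈ pfc, Wc z * Real.exp (Phi A (Fin.snoc z ω) / 4) := by
      rw [sum_piFinset_succ]
      apply Finset.sum_congr rfl
      intro ω _
      rw [Finset.mul_sum]
      apply Finset.sum_congr rfl
      intro z _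
      rw [prod_snoc]
      ring
    have hTle : (∑ x ∈ Fintype.piFinset Ω, (∏ i, P i (x i)) * Real.exp (Phi A x / 4)) ≤
        (2 - μA / μB) * μB⁻¹ := by
      rw [hT]
      calc ∑ ω ∈ Ω (Fin.last n), w ω *
            ∑ z ∈ pfc, Wc z * Real.exp (Phi A (Fin.snoc z ω) / 4)
          ≤ ∑ ω ∈ Ω (Fin.last n), w ω * ((2 - μAw ω / μB) * μB⁻¹) :=
            Finset.sum_le_sum fun ω hω =>
              mul_le_mul_of_nonneg_left (hInner ω hω) (hP0 _ _)
        _ = (∑ ω ∈ Ω (Fin.last n), (2 * w ω - w ω * μAw ω / μB)) * μB⁻¹ := by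
            rw [Finset.sum_mul]
            apply Finset.sum_congr rfl
            intro ω _
            ring
        _ = (2 - μA / μB) * μB⁻¹ := by
            congr 1
            rw [Finset.sum_sub_distrib, ← Finset.mul_sum, hP1 (Fin.last n), mul_one,
              ← Finset.sum_div]
            congr 2
            rw [hμA]
    have hxeq : (2 - μA / μB) * μB⁻¹ * μA = (μA / μB) * (2 - μA / μB) := by
      field_simp
    calc (∑ x ∈ Fintype.piFinset Ω, (∏ i, P i (x i)) * Real.exp (Phi A x / 4)) * μA
        ≤ (2 - μA / μB) * μB⁻¹ * μA := mul_le_mul_of_nonneg_right hTle hμA0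
      _ = (μA / μB) * (2 - μA / μB) := hxeq
      _ ≤ 1 := by nlinarith [sq_nonneg (1 - μA / μB)]

/-- Two-point inequality: P(f ≥ a+d) * P(f ≤ a) ≤ exp(-(d/σ)^p/4). -/
theorem two_point {n : ℕ} {X : Fin n → Type u} [∀ i, NormedAddCommGroup (X i)]
    [∀ i, NormedSpace ℝ (X i)] {p : ℝ} (hp : 2 ≤ p)
    (Ω : ∀ i, Finset (X i))
    (hdiam : ∀ i, Metric.diam ((Ω i : Set (X i))) ≤ 1)
    (P : ∀ i, X i → ℝ) (hP0 : ∀ i x, 0 ≤ P i x)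
    (hP1 : ∀ i, ∑ x ∈ Ω i, P i x = 1)
    (f : (∀ i, X i) → ℝ) {σ : ℝ} (hσ : 0 < σ)
    (hconv : ConvexOn ℝ (convexHull ℝ ↑(Fintype.piFinset Ω)) f)
    (hlip : ∀ x ∈ convexHull ℝ (↑(Fintype.piFinset Ω) : Set (∀ i, X i)),
      ∀ y ∈ convexHull ℝ (↑(Fintype.piFinset Ω) : Set (∀ i, X i)),
      |f x - f y| ≤ σ * (∑ i, ‖x i - y i‖ ^ p) ^ (1/p))
    (a d : ℝ) (hd : 0 < d) :
    (∑ x ∈ (Fintype.piFinset Ω).filter (fun x => a + d ≤ f x), ∏ i, P i (x i)) *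
      (∑ x ∈ (Fintype.piFinset Ω).filter (fun x => f x ≤ a), ∏ i, P i (x i)) ≤
      Real.exp (-((d / σ) ^ p) / 4) := by
  classical
  have hp0 : (0:ℝ) < p := by linarith
  set pf := Fintype.piFinset Ω with hpf
  set A := pf.filter (fun x => f x ≤ a) with hAdef
  set S := pf.filter (fun x => a + d ≤ f x) with hSdef
  have hW0 : ∀ x : (∀ i, X i), 0 ≤ ∏ i, P i (x i) :=
    fun x => Finset.prod_nonneg fun i _ => hP0 _ _
  rcases A.eq_empty_or_nonempty with he | hAne
  · rw [he]
    simp only [Finset.sum_empty, mul_zero]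
    positivity
  have hcore := core n X Ω P hP0 hP1 hdiam A (Finset.filter_subset _ _)
  -- the sublevel set is convex inside the hull
  have hsubC : convexHull ℝ (A : Set (∀ i, X i)) ⊆
      {v | v ∈ convexHull ℝ ((pf : Finset (∀ i, X i)) : Set (∀ i, X i)) ∧ f v ≤ a} := by
    apply convexHull_min
    · intro v hv
      rw [Finset.mem_coe, hAdef, Finset.mem_filter] at hv
      exact ⟨subset_convexHull ℝ _ (Finset.mem_coe.mpr hv.1), hv.2⟩
    · exact hconv.convex_le a
  -- Phi lower bound on S
  have hkey : ∀ x ∈ S, (d / σ) ^ p ≤ Phi A x := by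
    intro x hx
    rw [hSdef, Finset.mem_filter] at hx
    obtain ⟨hxpf, hxf⟩ := hx
    apply le_Phi hAne
    intro y hy
    obtain ⟨hyhull, hfy⟩ := hsubC hy
    have hxhull : x ∈ convexHull ℝ ((pf : Finset (∀ i, X i)) : Set (∀ i, X i)) :=
      subset_convexHull ℝ _ (Finset.mem_coe.mpr hxpf)
    have hlipxy := hlip x hxhull y hyhull
    have h1 : d ≤ σ * (∑ i, ‖x i - y i‖ ^ p) ^ (1/p) := by
      have : d ≤ f x - f y := by linarith
      calc d ≤ f x - f y := this
        _ ≤ |f x - f y| := le_abs_self _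
        _ ≤ _ := hlipxy
    have hSnn : (0:ℝ) ≤ ∑ i, ‖x i - y i‖ ^ p :=
      Finset.sum_nonneg fun i _ => Real.rpow_nonneg (norm_nonneg _) p
    have h2 : d / σ ≤ (∑ i, ‖x i - y i‖ ^ p) ^ (1/p) := by
      rw [div_le_iff₀ hσ]
      linarith
    have h3 : (d / σ) ^ p ≤ ((∑ i, ‖x i - y i‖ ^ p) ^ (1/p)) ^ p :=
      Real.rpow_le_rpow (div_nonneg (le_of_lt hd) (le_of_lt hσ)) h2 (le_of_lt hp0)
    have h4 : ((∑ i, ‖x i - y i‖ ^ p) ^ (1/p)) ^ p = ∑ i, ‖x i - y i‖ ^ p := by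
      rw [← Real.rpow_mul hSnn]
      rw [one_div_mul_cancel (ne_of_gt hp0), Real.rpow_one]
    have h5 : ∑ i, ‖x i - y i‖ ^ p ≤ ∑ i, ‖x i - y i‖ ^ 2 := by
      apply Finset.sum_le_sum
      intro i _
      have hn1 : ‖x i - y i‖ ≤ 1 :=
        norm_sub_le_one (hdiam i) (mem_hull_pi hxhull i) (mem_hull_pi hyhull i)
      rcases eq_or_lt_of_le (norm_nonneg (x i - y i)) with hz | hpos
      · rw [← hz, Real.zero_rpow (ne_of_gt hp0)]
        positivity
      · have h6 : ‖x i - y i‖ ^ p ≤ ‖x i - y i‖ ^ (2:ℝ) :=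
          Real.rpow_le_rpow_of_exponent_ge hpos hn1 hp
        have h7 : ‖x i - y i‖ ^ (2:ℝ) = ‖x i - y i‖ ^ (2:ℕ) := by
          rw [← Real.rpow_natCast]
          norm_num
        rw [h7] at h6
        exact h6
    linarith
  -- lower bound the exponential sum on S
  set T := ∑ x ∈ pf, (∏ i, P i (x i)) * Real.exp (Phi A x / 4) with hTdef
  have hTS : Real.exp ((d / σ) ^ p / 4) * (∑ x ∈ S, ∏ i, P i (x i)) ≤ T := by
    calc Real.exp ((d / σ) ^ p / 4) * (∑ x ∈ S, ∏ i, P i (x i))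
        = ∑ x ∈ S, (∏ i, P i (x i)) * Real.exp ((d / σ) ^ p / 4) := by
          rw [Finset.mul_sum]
          apply Finset.sum_congr rfl
          intro x _
          ring
      _ ≤ ∑ x ∈ S, (∏ i, P i (x i)) * Real.exp (Phi A x / 4) := by
          apply Finset.sum_le_sum
          intro x hx
          apply mul_le_mul_of_nonneg_left _ (hW0 x)
          apply Real.exp_le_exp.mpr
          have := hkey x hx
          linarith
      _ ≤ T := by
          rw [hTdef]
          apply Finset.sum_le_sum_of_subset_of_nonneg (Finset.filter_subset _ _)
          intro x _ _
          exact mul_nonneg (hW0 x) (le_of_lt (Real.exp_pos _))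
  have hμS0 : 0 ≤ ∑ x ∈ S, ∏ i, P i (x i) := Finset.sum_nonneg fun x _ => hW0 x
  have hμA0 : 0 ≤ ∑ x ∈ A, ∏ i, P i (x i) := Finset.sum_nonneg fun x _ => hW0 x
  have hchain : Real.exp ((d / σ) ^ p / 4) *
      ((∑ x ∈ S, ∏ i, P i (x i)) * (∑ x ∈ A, ∏ i, P i (x i))) ≤ 1 := by
    calc Real.exp ((d / σ) ^ p / 4) *
        ((∑ x ∈ S, ∏ i, P i (x i)) * (∑ x ∈ A, ∏ i, P i (x i)))
        = (Real.exp ((d / σ) ^ p / 4) * (∑ x ∈ S, ∏ i, P i (x i))) *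
            (∑ x ∈ A, ∏ i, P i (x i)) := by ring
      _ ≤ T * (∑ x ∈ A, ∏ i, P i (x i)) := mul_le_mul_of_nonneg_right hTS hμA0
      _ ≤ 1 := hcore
  rw [neg_div, Real.exp_neg, ← one_div, le_div_iff₀ (Real.exp_pos _)]
  calc (∑ x ∈ S, ∏ i, P i (x i)) * (∑ x ∈ A, ∏ i, P i (x i)) *
        Real.exp ((d / σ) ^ p / 4)
      = Real.exp ((d / σ) ^ p / 4) *
        ((∑ x ∈ S, ∏ i, P i (x i)) * (∑ x ∈ A, ∏ i, P i (x i))) := by ring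
    _ ≤ 1 := hchain

lemma tail_induction {α : Type v} [DecidableEq α] (pf : Finset α) (W : α → ℝ)
    (hW0 : ∀ x, 0 ≤ W x) (g : α → ℝ) (K : ℝ) (hK0 : 0 ≤ K)
    {β c : ℝ} (hβ : 0 < β) (hc : 0 < c)
    (htp : ∀ u', 0 < u' →
      K * (∑ x ∈ pf.filter (fun x => u' ≤ g x), W x) ≤ Real.exp (-(β * (c + u')))) :
    ∀ (m : ℕ) (u : ℝ), 0 ≤ u → (pf.filter (fun x => u < g x)).card ≤ m →
      K * (∑ x ∈ pf.filter (fun x => u < g x), W x * (g x - u)) ≤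
        β⁻¹ * Real.exp (-(β * (c + u))) := by
  intro m
  induction m with
  | zero =>
    intro u hu hcard
    have he : pf.filter (fun x => u < g x) = ∅ := Finset.card_eq_zero.mp (Nat.le_zero.mp hcard)
    rw [he, Finset.sum_empty, mul_zero]
    positivity
  | succ m ihm =>
    intro u hu hcard
    set s := pf.filter (fun x => u < g x) with hsdef
    rcases s.eq_empty_or_nonempty with he | hne
    · rw [he, Finset.sum_empty, mul_zero]
      positivity
    obtain ⟨x₀, hx₀s, hmin⟩ := Finset.exists_min_image s g hne
    set u' := g x₀ with hu'def
    have hu'u : u < u' := (Finset.mem_filter.mp hx₀s).2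
    set s' := pf.filter (fun x => u' < g x) with hs'def
    have hss : s' ⊆ s := by
      intro x hx
      rw [hs'def, Finset.mem_filter] at hx
      rw [hsdef, Finset.mem_filter]
      exact ⟨hx.1, lt_trans hu'u hx.2⟩
    have hx₀ns' : s' = s' := rfl
    have hx₀ns'2 : x₀ ∉ s' := by
      rw [hs'def, Finset.mem_filter]
      push_neg
      intro _
      exact le_refl u'
    have hcard' : s'.card ≤ m := by
      have hlt : s'.card < s.card :=
        Finset.card_lt_card ((Finset.ssubset_iff_of_subset hss).mpr ⟨x₀, hx₀s, hx₀ns'2⟩)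
      omega
    have ih := ihm u' (le_trans hu (le_of_lt hu'u)) hcard'
    have hvanish : ∀ x ∈ s, x ∉ s' → W x * (g x - u') = 0 := by
      intro x hxs hxns'
      have hx1 : x ∈ pf := (Finset.mem_filter.mp hxs).1
      have hx2 : ¬ (u' < g x) := by
        intro hcon
        exact hxns' (by rw [hs'def, Finset.mem_filter]; exact ⟨hx1, hcon⟩)
      have hge : u' ≤ g x := hmin x hxs
      have : g x - u' = 0 := by
        push_neg at hx2
        linarith
      rw [this, mul_zero]
    have hsum1 : ∑ x ∈ s, W x * (g x - u) =
        (∑ x ∈ s', W x * (g x - u')) + (u' - u) * ∑ x ∈ s, W x := by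
      have e1 : ∑ x ∈ s, W x * (g x - u) = ∑ x ∈ s, (W x * (g x - u') + (u' - u) * W x) := by
        apply Finset.sum_congr rfl
        intro x _
        ring
      rw [e1, Finset.sum_add_distrib, ← Finset.mul_sum]
      congr 1
      exact (Finset.sum_subset hss hvanish).symm
    have hμs : K * ∑ x ∈ s, W x ≤ Real.exp (-(β * (c + u'))) := by
      have hsub2 : s ⊆ pf.filter (fun x => u' ≤ g x) := by
        intro x hx
        rw [Finset.mem_filter]
        exact ⟨(Finset.mem_filter.mp hx).1, hmin x hx⟩
      have hmono : ∑ x ∈ s, W x ≤ ∑ x ∈ pf.filter (fun x => u' ≤ g x), W x :=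
        Finset.sum_le_sum_of_subset_of_nonneg hsub2 fun x _ _ => hW0 x
      calc K * ∑ x ∈ s, W x ≤ K * ∑ x ∈ pf.filter (fun x => u' ≤ g x), W x :=
            mul_le_mul_of_nonneg_left hmono hK0
        _ ≤ Real.exp (-(β * (c + u'))) := htp u' (lt_of_le_of_lt hu hu'u)
    have hfinal : β⁻¹ * Real.exp (-(β * (c + u'))) + (u' - u) * Real.exp (-(β * (c + u')))
        ≤ β⁻¹ * Real.exp (-(β * (c + u))) := by
      have hexp := Real.add_one_le_exp (β * (u' - u))
      have he2 : Real.exp (-(β * (c + u))) =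
          Real.exp (-(β * (c + u'))) * Real.exp (β * (u' - u)) := by
        rw [← Real.exp_add]
        congr 1
        ring
      rw [he2]
      have hE0 : 0 < Real.exp (-(β * (c + u'))) := Real.exp_pos _
      have hmul : β⁻¹ * (Real.exp (-(β * (c + u'))) * (β * (u' - u) + 1)) ≤
          β⁻¹ * (Real.exp (-(β * (c + u'))) * Real.exp (β * (u' - u))) := by
        apply mul_le_mul_of_nonneg_left _ (le_of_lt (inv_pos.mpr hβ))
        apply mul_le_mul_of_nonneg_left _ (le_of_lt hE0)
        linarith
      have heq : β⁻¹ * (Real.exp (-(β * (c + u'))) * (β * (u' - u) + 1)) =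
          β⁻¹ * Real.exp (-(β * (c + u'))) + (u' - u) * Real.exp (-(β * (c + u'))) := by
        field_simp
        ring
      linarith
    calc K * ∑ x ∈ s, W x * (g x - u)
        = K * (∑ x ∈ s', W x * (g x - u')) + (u' - u) * (K * ∑ x ∈ s, W x) := by
          rw [hsum1]
          ring
      _ ≤ β⁻¹ * Real.exp (-(β * (c + u'))) + (u' - u) * Real.exp (-(β * (c + u'))) := by
          apply add_le_add ih
          exact mul_le_mul_of_nonneg_left hμs (by linarith)
      _ ≤ _ := hfinal

end Cor4

set_option maxHeartbeats 2000000

/-- Corollary 4, inequality (9): deviation from the expectation for convex functions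
that are Lipschitz with constant `σ` in the ℓᵖ-sum norm, on a product space. -/
theorem stmt_11 {n : ℕ} {X : Fin n → Type*} [∀ i, NormedAddCommGroup (X i)]
    [∀ i, NormedSpace ℝ (X i)] (p : ℝ) (hp : 2 ≤ p)
    (Ω : ∀ i, Finset (X i))
    (hdiam : ∀ i, Metric.diam (Ω i : Set (X i)) ≤ 1)
    (P : ∀ i, X i → ℝ) (hP0 : ∀ i x, 0 ≤ P i x)
    (hP1 : ∀ i, ∑ x ∈ Ω i, P i x = 1)
    (f : (∀ i, X i) → ℝ) (σ : ℝ) (hσ : 0 ≤ σ)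
    (hconv : ConvexOn ℝ (convexHull ℝ ↑(Fintype.piFinset Ω)) f)
    (hlip : ∀ x ∈ convexHull ℝ (↑(Fintype.piFinset Ω) : Set (∀ i, X i)),
      ∀ y ∈ convexHull ℝ (↑(Fintype.piFinset Ω) : Set (∀ i, X i)),
      |f x - f y| ≤ σ * (∑ i, ‖x i - y i‖ ^ p) ^ (1/p))
    (c : ℝ) (hc : 0 < c) :
    ∑ t ∈ Fintype.piFinset Ω,
        (if |f t - ∑ u ∈ Fintype.piFinset Ω, (∏ i, P i (u i)) * f u| > c
          then ∏ i, P i (t i) else 0)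
      ≤ 8 * Real.exp (-(c ^ p) / (32 * σ ^ p)) := by
  classical
  have hW0 : ∀ t : (∀ i, X i), (0:ℝ) ≤ ∏ i, P i (t i) :=
    fun t => Finset.prod_nonneg fun i _ => hP0 _ _
  have hsumW : ∑ t ∈ Fintype.piFinset Ω, ∏ i, P i (t i) = 1 := by
    rw [← Finset.prod_univ_sum]
    rw [Finset.prod_congr rfl fun i _ => hP1 i]
    exact Finset.prod_const_one
  set pf := Fintype.piFinset Ω with hpfdef
  set E := ∑ u ∈ pf, (∏ i, P i (u i)) * f u with hEdef
  rcases eq_or_lt_of_le hσ with hσ0 | hσpos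
  · -- σ = 0 : f is constant on the cube, LHS = 0
    have hconst : ∀ t ∈ pf, f t = E := by
      intro t ht
      have hthull : t ∈ convexHull ℝ ((pf : Finset (∀ i, X i)) : Set (∀ i, X i)) :=
        subset_convexHull ℝ _ (Finset.mem_coe.mpr ht)
      have hfu : ∀ u ∈ pf, f u = f t := by
        intro u hu
        have h := hlip u (subset_convexHull ℝ _ (Finset.mem_coe.mpr hu)) t hthull
        rw [← hσ0, zero_mul] at h
        have heq0 : |f u - f t| = 0 := le_antisymm h (abs_nonneg _)
        have := sub_eq_zero.mp (abs_eq_zero.mp heq0)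
        linarith
      have : E = f t := by
        rw [hEdef]
        calc ∑ u ∈ pf, (∏ i, P i (u i)) * f u
            = ∑ u ∈ pf, (∏ i, P i (u i)) * f t :=
              Finset.sum_congr rfl fun u hu => by rw [hfu u hu]
          _ = (∑ u ∈ pf, ∏ i, P i (u i)) * f t := by rw [Finset.sum_mul]
          _ = f t := by rw [hsumW, one_mul]
      linarith
    have hzero : (∑ t ∈ pf, if |f t - E| > c then ∏ i, P i (t i) else 0) = 0 := by
      apply Finset.sum_eq_zero
      intro t ht
      rw [if_neg]
      rw [hconst t ht, sub_self, abs_zero]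
      exact not_lt.mpr (le_of_lt hc)
    rw [hzero]
    positivity
  -- σ > 0
  have hσp : 0 < σ ^ p := Real.rpow_pos_of_pos hσpos p
  have hcp : 0 < c ^ p := Real.rpow_pos_of_pos hc p
  rcases lt_or_ge (c ^ p) (4 * σ ^ p) with hsmall | hbig
  · -- trivial regime: RHS ≥ 1 ≥ LHS
    have h1 : (∑ t ∈ pf, if |f t - E| > c then ∏ i, P i (t i) else 0) ≤ 1 := by
      rw [← hsumW]
      apply Finset.sum_le_sum
      intro t _
      by_cases h : |f t - E| > c
      · rw [if_pos h]
      · rw [if_neg h]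
        exact hW0 t
    have hle : -(1:ℝ)/8 ≤ -(c ^ p) / (32 * σ ^ p) := by
      have h2 : c ^ p / (32 * σ ^ p) ≤ 1/8 := by
        rw [div_le_div_iff₀ (by positivity) (by norm_num)]
        nlinarith
      have h3 : -(c ^ p) / (32 * σ ^ p) = -(c ^ p / (32 * σ ^ p)) := by ring
      linarith [h3]
    have h3 : Real.exp (-(1:ℝ)/8) ≤ Real.exp (-(c ^ p) / (32 * σ ^ p)) :=
      Real.exp_le_exp.mpr hle
    have he1 : Real.exp ((1:ℝ)/8) ≤ 8 := by
      calc Real.exp ((1:ℝ)/8) ≤ Real.exp 1 := Real.exp_le_exp.mpr (by norm_num)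
        _ ≤ 8 := le_of_lt (lt_of_lt_of_le Real.exp_one_lt_d9 (by norm_num))
    have hz : Real.exp (-(1:ℝ)/8) * Real.exp ((1:ℝ)/8) = 1 := by
      rw [← Real.exp_add]
      norm_num
    have h4 : (1:ℝ) ≤ 8 * Real.exp (-(1:ℝ)/8) := by
      nlinarith [Real.exp_pos (-(1:ℝ)/8)]
    calc (∑ t ∈ pf, if |f t - E| > c then ∏ i, P i (t i) else 0) ≤ 1 := h1
      _ ≤ 8 * Real.exp (-(1:ℝ)/8) := h4
      _ ≤ 8 * Real.exp (-(c ^ p) / (32 * σ ^ p)) := by linarith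
  -- main regime
  set β := c ^ (p - 1) / (4 * σ ^ p) with hβdef
  have hcp1 : 0 < c ^ (p-1) := Real.rpow_pos_of_pos hc _
  have hβ0 : 0 < β := by positivity
  have hcpsplit : c ^ (p-1) * c = c ^ p := by
    rw [← Real.rpow_add_one (ne_of_gt hc) (p-1)]
    norm_num
  have hβc : β * c = c ^ p / (4 * σ ^ p) := by
    rw [hβdef, div_mul_eq_mul_div, hcpsplit]
  have hgap : ∀ t : ℝ, c ≤ t → Real.exp (-((t/σ)^p)/4) ≤ Real.exp (-(β * t)) := by
    intro t hct
    apply Real.exp_le_exp.mpr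
    have ht0 : 0 < t := lt_of_lt_of_le hc hct
    have h1 : c ^ (p-1) ≤ t ^ (p-1) := Real.rpow_le_rpow (le_of_lt hc) hct (by linarith)
    have h2 : t ^ (p-1) * t = t ^ p := by
      rw [← Real.rpow_add_one (ne_of_gt ht0) (p-1)]
      norm_num
    have h3 : (t/σ)^p = t^p / σ^p := Real.div_rpow (le_of_lt ht0) (le_of_lt hσpos) p
    have h4 : c^(p-1) * t ≤ t^p := by
      calc c^(p-1) * t ≤ t^(p-1) * t := by nlinarith
        _ = t^p := h2
    have h5 : β * t ≤ (t/σ)^p/4 := by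
      rw [h3, hβdef, div_mul_eq_mul_div, div_div]
      rw [div_le_div_iff₀ (by positivity) (by positivity)]
      nlinarith [hσp]
    linarith
  have htpβ : ∀ a d : ℝ, c ≤ d →
      (∑ x ∈ pf.filter (fun x => a + d ≤ f x), ∏ i, P i (x i)) *
        (∑ x ∈ pf.filter (fun x => f x ≤ a), ∏ i, P i (x i)) ≤ Real.exp (-(β * d)) := by
    intro a d hcd
    have h := Cor4.two_point hp Ω hdiam P hP0 hP1 f hσpos hconv hlip a d (lt_of_lt_of_le hc hcd)
    calc (∑ x ∈ pf.filter (fun x => a + d ≤ f x), ∏ i, P i (x i)) *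
          (∑ x ∈ pf.filter (fun x => f x ≤ a), ∏ i, P i (x i))
        ≤ Real.exp (-((d/σ)^p)/4) := h
      _ ≤ Real.exp (-(β * d)) := hgap d hcd
  set L := pf.filter (fun x => f x ≤ E - c) with hLdef
  set U := pf.filter (fun x => E + c ≤ f x) with hUdef
  set μL := ∑ x ∈ L, ∏ i, P i (x i) with hμLdef
  set μU := ∑ x ∈ U, ∏ i, P i (x i) with hμUdef
  have hμL0 : 0 ≤ μL := Finset.sum_nonneg fun x _ => hW0 x
  have hμU0 : 0 ≤ μU := Finset.sum_nonneg fun x _ => hW0 x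
  have htpL : ∀ u', 0 < u' →
      μL * (∑ x ∈ pf.filter (fun x => u' ≤ (fun x => f x - E) x), ∏ i, P i (x i)) ≤
        Real.exp (-(β * (c + u'))) := by
    intro u' hu'
    have h := htpβ (E - c) (c + u') (by linarith)
    have heq : pf.filter (fun x => (E - c) + (c + u') ≤ f x) =
        pf.filter (fun x => u' ≤ (fun x => f x - E) x) := by
      apply Finset.filter_congr
      intro x _
      simp only []
      constructor <;> intro <;> linarith
    rw [heq] at h
    calc μL * (∑ x ∈ pf.filter (fun x => u' ≤ (fun x => f x - E) x), ∏ i, P i (x i))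
        = (∑ x ∈ pf.filter (fun x => u' ≤ (fun x => f x - E) x), ∏ i, P i (x i)) * μL := by
          ring
      _ ≤ Real.exp (-(β * (c + u'))) := h
  have htpU : ∀ u', 0 < u' →
      μU * (∑ x ∈ pf.filter (fun x => u' ≤ (fun x => E - f x) x), ∏ i, P i (x i)) ≤
        Real.exp (-(β * (c + u'))) := by
    intro u' hu'
    have h := htpβ (E - u') (u' + c) (by linarith)
    have heq1 : pf.filter (fun x => (E - u') + (u' + c) ≤ f x) = U := by
      rw [hUdef]
      apply Finset.filter_congr
      intro x _
      constructor <;> intro <;> linarith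
    have heq2 : pf.filter (fun x => f x ≤ E - u') =
        pf.filter (fun x => u' ≤ (fun x => E - f x) x) := by
      apply Finset.filter_congr
      intro x _
      simp only []
      constructor <;> intro <;> linarith
    rw [heq1, heq2] at h
    have hcomm : -(β * (u' + c)) = -(β * (c + u')) := by ring
    rw [hcomm] at h
    exact h
  have htailL := Cor4.tail_induction pf (fun t => ∏ i, P i (t i)) hW0
    (fun x => f x - E) μL hμL0 hβ0 hc htpL
    (pf.filter (fun x => (0:ℝ) < (fun x => f x - E) x)).card 0 (le_refl 0) (le_refl _)
  have htailU := Cor4.tail_induction pf (fun t => ∏ i, P i (t i)) hW0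
    (fun x => E - f x) μU hμU0 hβ0 hc htpU
    (pf.filter (fun x => (0:ℝ) < (fun x => E - f x) x)).card 0 (le_refl 0) (le_refl _)
  set θp := ∑ x ∈ pf.filter (fun x => (0:ℝ) < (fun x => f x - E) x),
    (∏ i, P i (x i)) * ((fun x => f x - E) x - 0) with hθpdef
  set θm := ∑ x ∈ pf.filter (fun x => (0:ℝ) < (fun x => E - f x) x),
    (∏ i, P i (x i)) * ((fun x => E - f x) x - 0) with hθmdef
  have hθp_max : θp = ∑ x ∈ pf, (∏ i, P i (x i)) * max (f x - E) 0 := by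
    rw [hθpdef, Finset.sum_filter]
    apply Finset.sum_congr rfl
    intro x _
    simp only []
    by_cases h : (0:ℝ) < f x - E
    · rw [if_pos h, max_eq_left (le_of_lt h)]
      ring
    · rw [if_neg h, max_eq_right (by push_neg at h; linarith), mul_zero]
  have hθm_max : θm = ∑ x ∈ pf, (∏ i, P i (x i)) * max (E - f x) 0 := by
    rw [hθmdef, Finset.sum_filter]
    apply Finset.sum_congr rfl
    intro x _
    simp only []
    by_cases h : (0:ℝ) < E - f x
    · rw [if_pos h, max_eq_left (le_of_lt h)]
      ring
    · rw [if_neg h, max_eq_right (by push_neg at h; linarith), mul_zero]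
  have hzeroE : ∑ x ∈ pf, (∏ i, P i (x i)) * (f x - E) = 0 := by
    have hexp : ∑ x ∈ pf, (∏ i, P i (x i)) * (f x - E) =
        (∑ x ∈ pf, (∏ i, P i (x i)) * f x) - (∑ x ∈ pf, ∏ i, P i (x i)) * E := by
      rw [Finset.sum_mul, ← Finset.sum_sub_distrib]
      apply Finset.sum_congr rfl
      intro x _
      ring
    rw [hexp, hsumW, one_mul, ← hEdef, sub_self]
  have hθeq : θp = θm := by
    have hdiff : ∀ x : (∀ i, X i), max (f x - E) 0 - max (E - f x) 0 = f x - E := by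
      intro x
      rcases le_total (f x - E) 0 with h | h
      · rw [max_eq_right h, max_eq_left (by linarith)]
        ring
      · rw [max_eq_left h, max_eq_right (by linarith)]
        ring
    have hsub : θp - θm = 0 := by
      rw [hθp_max, hθm_max, ← Finset.sum_sub_distrib]
      calc ∑ x ∈ pf, ((∏ i, P i (x i)) * max (f x - E) 0 - (∏ i, P i (x i)) * max (E - f x) 0)
          = ∑ x ∈ pf, (∏ i, P i (x i)) * (f x - E) := by
            apply Finset.sum_congr rfl
            intro x _
            rw [← mul_sub, hdiff x]
        _ = 0 := hzeroE
    linarith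
  -- Markov bounds
  have hMarkL : c * μL ≤ θm := by
    rw [hθm_max]
    calc c * μL = ∑ x ∈ L, (∏ i, P i (x i)) * c := by
          rw [Finset.mul_sum]
          apply Finset.sum_congr rfl
          intro x _
          ring
      _ ≤ ∑ x ∈ L, (∏ i, P i (x i)) * max (E - f x) 0 := by
          apply Finset.sum_le_sum
          intro x hx
          apply mul_le_mul_of_nonneg_left _ (hW0 x)
          have hxL : f x ≤ E - c := (Finset.mem_filter.mp hx).2
          calc c ≤ E - f x := by linarith
            _ ≤ max (E - f x) 0 := le_max_left _ _
      _ ≤ ∑ x ∈ pf, (∏ i, P i (x i)) * max (E - f x) 0 := by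
          apply Finset.sum_le_sum_of_subset_of_nonneg (Finset.filter_subset _ _)
          intro x _ _
          exact mul_nonneg (hW0 x) (le_max_right _ _)
  have hMarkU : c * μU ≤ θp := by
    rw [hθp_max]
    calc c * μU = ∑ x ∈ U, (∏ i, P i (x i)) * c := by
          rw [Finset.mul_sum]
          apply Finset.sum_congr rfl
          intro x _
          ring
      _ ≤ ∑ x ∈ U, (∏ i, P i (x i)) * max (f x - E) 0 := by
          apply Finset.sum_le_sum
          intro x hx
          apply mul_le_mul_of_nonneg_left _ (hW0 x)
          have hxU : E + c ≤ f x := (Finset.mem_filter.mp hx).2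
          calc c ≤ f x - E := by linarith
            _ ≤ max (f x - E) 0 := le_max_left _ _
      _ ≤ ∑ x ∈ pf, (∏ i, P i (x i)) * max (f x - E) 0 := by
          apply Finset.sum_le_sum_of_subset_of_nonneg (Finset.filter_subset _ _)
          intro x _ _
          exact mul_nonneg (hW0 x) (le_max_right _ _)
  have hc0' : c + 0 = c := add_zero c
  rw [hc0'] at htailL htailU
  have hL2 : μL * μL * c ≤ β⁻¹ * Real.exp (-(β * c)) := by
    calc μL * μL * c = μL * (c * μL) := by ring
      _ ≤ μL * θm := mul_le_mul_of_nonneg_left hMarkL hμL0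
      _ = μL * θp := by rw [hθeq]
      _ ≤ β⁻¹ * Real.exp (-(β * c)) := htailL
  have hU2 : μU * μU * c ≤ β⁻¹ * Real.exp (-(β * c)) := by
    calc μU * μU * c = μU * (c * μU) := by ring
      _ ≤ μU * θp := mul_le_mul_of_nonneg_left hMarkU hμU0
      _ = μU * θm := by rw [hθeq]
      _ ≤ β⁻¹ * Real.exp (-(β * c)) := htailU
  -- from squares to tails
  have h1βc : 1 ≤ β * c := by
    rw [hβc, le_div_iff₀ (by positivity)]
    linarith
  have hβinvc : β⁻¹ ≤ c := by
    have hfe : β⁻¹ * (β * c) = c := by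
      field_simp
    nlinarith [inv_pos.mpr hβ0]
  set y := Real.exp (-(c^p)/(8 * σ^p)) with hydef
  have hy0 : 0 < y := Real.exp_pos _
  have hy2 : y * y = Real.exp (-(β * c)) := by
    rw [hydef, ← Real.exp_add, hβc]
    congr 1
    field_simp
    ring
  have hsq : ∀ μ : ℝ, 0 ≤ μ → μ * μ * c ≤ β⁻¹ * Real.exp (-(β * c)) → μ ≤ y := by
    intro μ hμ0 hμ2
    have h2 : μ * μ * c ≤ c * (y * y) := by
      calc μ * μ * c ≤ β⁻¹ * Real.exp (-(β * c)) := hμ2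
        _ ≤ c * Real.exp (-(β * c)) :=
            mul_le_mul_of_nonneg_right hβinvc (le_of_lt (Real.exp_pos _))
        _ = c * (y * y) := by rw [hy2]
    have h3 : μ * μ ≤ y * y := by
      have := (mul_le_mul_iff_of_pos_right hc).mp (by linarith [h2] : μ * μ * c ≤ (y * y) * c)
      linarith [this]
    by_contra hcon
    push_neg at hcon
    nlinarith
  have hμLy : μL ≤ y := hsq μL hμL0 hL2
  have hμUy : μU ≤ y := hsq μU hμU0 hU2
  -- final combination
  have hLHS : (∑ t ∈ pf, if |f t - E| > c then ∏ i, P i (t i) else 0) =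
      ∑ t ∈ pf.filter (fun t => |f t - E| > c), ∏ i, P i (t i) :=
    (Finset.sum_filter _ _).symm
  rw [hLHS]
  have hsplit : pf.filter (fun t => |f t - E| > c) ⊆ U ∪ L := by
    intro x hx
    obtain ⟨hxpf, hxc⟩ := Finset.mem_filter.mp hx
    rw [Finset.mem_union]
    rcases lt_abs.mp hxc with h | h
    · left
      rw [hUdef, Finset.mem_filter]
      exact ⟨hxpf, by linarith⟩
    · right
      rw [hLdef, Finset.mem_filter]
      exact ⟨hxpf, by linarith⟩
  have hdisj : Disjoint U L := by
    rw [Finset.disjoint_left]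
    intro x hxU hxL
    have h1 := (Finset.mem_filter.mp hxU).2
    have h2 := (Finset.mem_filter.mp hxL).2
    linarith
  have hfin1 : y ≤ Real.exp (-(c^p)/(32 * σ^p)) := by
    rw [hydef]
    apply Real.exp_le_exp.mpr
    have h6 : c^p/(32*σ^p) ≤ c^p/(8*σ^p) := by
      apply div_le_div_of_nonneg_left (le_of_lt hcp) (by positivity)
      nlinarith
    have h7 : -(c^p)/(8*σ^p) = -(c^p/(8*σ^p)) := by ring
    have h8 : -(c^p)/(32*σ^p) = -(c^p/(32*σ^p)) := by ring
    linarith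
  calc ∑ t ∈ pf.filter (fun t => |f t - E| > c), ∏ i, P i (t i)
      ≤ ∑ t ∈ U ∪ L, ∏ i, P i (t i) :=
        Finset.sum_le_sum_of_subset_of_nonneg hsplit fun x _ _ => hW0 x
    _ = μU + μL := Finset.sum_union hdisj
    _ ≤ y + y := add_le_add hμUy hμLy
    _ ≤ 8 * Real.exp (-(c^p)/(32 * σ^p)) := by
        linarith [Real.exp_pos (-(c^p)/(32 * σ^p)), hfin1]
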